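/- For any positive integer n and nonnegative integer a, H_n^*({2}^a, 1) = 2 ∑_{k=1}^n (C(n,k)/C(n+k,n)) · 1/k^{2a+1}, the q→1 limit case of the corresponding q-identity; in the limit n→∞ this yields ζ^*({2}^a,1) = 2ζ(2a+1) for a ≥ 1. -/

import Mathlib

open Finset

/-- q-analogue of a natural number: [m]_q = (1-q^m)/(1-q). -/
noncomputable def qnum (q : ℝ) (m : ℕ) : ℝ := (1 - q ^ m) / (1 - q)

/-- q-Pochhammer (q;q)_n = ∏_{k=0}^{n-1} (1 - q^{k+1}). -/
noncomputable def qPoch (q : ℝ) (n : ℕ) : ℝ := ∏ k ∈ Finset.range n, (1 - q ^ (k + 1))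

/-- Gaussian q-binomial coefficient, 0 when m > n. -/
noncomputable def qbinom (q : ℝ) (n m : ℕ) : ℝ :=
  if m ≤ n then qPoch q n / (qPoch q m * qPoch q (n - m)) else 0

/-- q-multiple harmonic star sum H_n^*[s₁,…,s_m]. -/
noncomputable def qHstar (q : ℝ) : List ℕ → ℕ → ℝ
  | [], _ => 1
  | s :: rest, n => ∑ k ∈ Finset.Icc 1 n, q ^ k / qnum q k ^ s * qHstar q rest k

/-- q-multiple zeta star value ζ_q^*[s₁,…,s_m]. -/
noncomputable def qZetaStar (q : ℝ) : List ℕ → ℝ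
  | [] => 1
  | s :: rest => ∑' k : ℕ, q ^ (k + 1) / qnum q (k + 1) ^ s * qHstar q rest (k + 1)

/-- strict multiple harmonic sum ∑_{n ≥ k₁ > … > k_r ≥ 1} ∏ 1/k_j^{p_j}. -/
noncomputable def Hstrict : List ℕ → ℕ → ℝ
  | [], _ => 1
  | p :: rest, n => ∑ k ∈ Finset.Icc 1 n, (1 : ℝ) / (k : ℝ) ^ p * Hstrict rest (k - 1)

/-- binomial-weighted strict multiple harmonic sum Ĥ_n(p). -/
noncomputable def Hhat : List ℕ → ℕ → ℝ
  | [], _ => 1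
  | p :: rest, n => ∑ k ∈ Finset.Icc 1 n,
      ((n.choose k : ℝ) / ((n + k).choose n)) * ((1 : ℝ) / (k : ℝ) ^ p) * Hstrict rest (k - 1)

/-- ordinary multiple harmonic star sum H_n^*(s₁,…,s_m). -/
noncomputable def HstarO : List ℕ → ℕ → ℝ
  | [], _ => 1
  | s :: rest, n => ∑ k ∈ Finset.Icc 1 n, (1 : ℝ) / (k : ℝ) ^ s * HstarO rest k

/-- ordinary multiple zeta star value. -/
noncomputable def zetaStarO : List ℕ → ℝ
  | [] => 1
  | s :: rest => ∑' k : ℕ, (1 : ℝ) / ((k : ℝ) + 1) ^ s * HstarO rest (k + 1)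

/-- Merge a list of parts according to a comma(true)/plus(false) pattern. -/
def mergeComp : ℕ → List ℕ → List Bool → List ℕ
  | a, [], _ => [a]
  | a, _ :: _, [] => [a]
  | a, b :: t, true :: bs => a :: mergeComp b t bs
  | a, b :: t, false :: bs => mergeComp (a + b) t bs


noncomputable def aux19c (n k : ℕ) : ℝ := (n.choose k : ℝ) / ((n + k).choose n : ℝ)

lemma aux19c_nonneg (n k : ℕ) : 0 ≤ aux19c n k := by
  unfold aux19c; positivity

lemma aux19c_pos_denom (n k : ℕ) : (0:ℝ) < ((n + k).choose n : ℝ) := by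
  exact_mod_cast Nat.choose_pos (Nat.le_add_right n k)

lemma aux19c_le_one (n k : ℕ) : aux19c n k ≤ 1 := by
  unfold aux19c
  rw [div_le_one (aux19c_pos_denom n k)]
  have h1 : (n+k).choose k = (n+k).choose n := by
    have := Nat.choose_symm (Nat.le_add_right n k)
    rwa [Nat.add_sub_cancel_left] at this
  have h2 : n.choose k ≤ (n+k).choose k := Nat.choose_le_choose k (Nat.le_add_right n k)
  exact_mod_cast h1 ▸ h2

lemma aux19c_fac {n k : ℕ} (h : k ≤ n) :
    aux19c n k = ((n.factorial : ℝ))^2 / (((n-k).factorial : ℝ) * ((n+k).factorial : ℝ)) := by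
  unfold aux19c
  rw [Nat.cast_choose ℝ h, Nat.cast_choose ℝ (Nat.le_add_right n k),
    Nat.add_sub_cancel_left]
  have h1 : ((k).factorial : ℝ) ≠ 0 := by exact_mod_cast (Nat.factorial_pos k).ne'
  have h2 : ((n-k).factorial : ℝ) ≠ 0 := by exact_mod_cast (Nat.factorial_pos _).ne'
  have h3 : ((n+k).factorial : ℝ) ≠ 0 := by exact_mod_cast (Nat.factorial_pos _).ne'
  have h4 : ((n).factorial : ℝ) ≠ 0 := by exact_mod_cast (Nat.factorial_pos _).ne'
  field_simp

lemma aux19c_rec {m k : ℕ} (h : k ≤ m + 1) :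
    aux19c (m+1) k - aux19c m k = ((k:ℝ)/((m:ℕ)+1))^2 * aux19c (m+1) k := by
  have hm1 : ((m:ℝ)+1) ≠ 0 := by positivity
  rcases Nat.lt_or_ge m k with hk | hk
  · -- k = m+1
    have hk1 : k = m + 1 := le_antisymm h hk
    subst hk1
    have h0 : aux19c m (m+1) = 0 := by
      unfold aux19c
      rw [Nat.choose_eq_zero_of_lt (Nat.lt_succ_self m)]
      simp
    rw [h0]
    push_cast
    field_simp
    ring
  · -- k ≤ m
    rw [aux19c_fac h, aux19c_fac hk]
    have e1 : (m+1).factorial = (m+1) * m.factorial := rfl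
    have e2 : (m+1-k) = (m-k)+1 := by omega
    have e3 : (m+1-k).factorial = (m+1-k) * (m-k).factorial := by rw [e2]; rfl
    have e4 : (m+1+k).factorial = (m+1+k) * (m+k).factorial := by
      have : m+1+k = (m+k)+1 := by omega
      rw [this]; rfl
    rw [e1, e3, e4]
    have c2 : ((m+1-k : ℕ) : ℝ) = (m:ℝ) + 1 - k := by
      push_cast [Nat.cast_sub (by omega : k ≤ m+1)]; ring
    have c4 : ((m+1+k : ℕ) : ℝ) = (m:ℝ) + 1 + k := by push_cast; ring
    push_cast [c2]
    have f1 : ((m.factorial : ℝ)) ≠ 0 := by exact_mod_cast (Nat.factorial_pos _).ne'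
    have f2 : (((m-k).factorial : ℝ)) ≠ 0 := by exact_mod_cast (Nat.factorial_pos _).ne'
    have f3 : (((m+k).factorial : ℝ)) ≠ 0 := by exact_mod_cast (Nat.factorial_pos _).ne'
    have g2 : ((m:ℝ) + 1 - k) ≠ 0 := by
      have : (k:ℝ) ≤ m := by exact_mod_cast hk
      nlinarith
    have g3 : ((m:ℝ) + 1 + k) ≠ 0 := by positivity
    field_simp
    ring

lemma aux19c_central {n k : ℕ} (h : k ≤ n) :
    aux19c n k = (((2*n).choose (n+k) : ℝ)) / (((2*n).choose n : ℝ)) := by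
  rw [aux19c_fac h, Nat.cast_choose ℝ (by omega : n + k ≤ 2*n),
    Nat.cast_choose ℝ (by omega : n ≤ 2*n)]
  have e1 : 2*n - (n+k) = n - k := by omega
  have e2 : 2*n - n = n := by omega
  rw [e1, e2]
  have f1 : ((n.factorial : ℝ)) ≠ 0 := by exact_mod_cast (Nat.factorial_pos _).ne'
  have f2 : (((n-k).factorial : ℝ)) ≠ 0 := by exact_mod_cast (Nat.factorial_pos _).ne'
  have f3 : (((n+k).factorial : ℝ)) ≠ 0 := by exact_mod_cast (Nat.factorial_pos _).ne'
  have f4 : (((2*n).factorial : ℝ)) ≠ 0 := by exact_mod_cast (Nat.factorial_pos _).ne'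
  field_simp

lemma aux19_telescope {n k : ℕ} (hn : 1 ≤ n) (hk1 : 1 ≤ k) (hk : k ≤ n) :
    (k:ℝ) * ((2*n).choose (n+k) : ℝ)
      = n * (((2*n-1).choose (n+k-1) : ℝ) - ((2*n-1).choose (n+k) : ℝ)) := by
  have h1 : (2*n) * (2*n-1).choose (n+k-1) = (2*n).choose (n+k) * (n+k) := by
    have := Nat.add_one_mul_choose_eq (2*n-1) (n+k-1)
    have e1 : (2*n-1) + 1 = 2*n := by omega
    have e2 : (n+k-1) + 1 = n+k := by omega
    rwa [e1, e2] at this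
  have h2 : (2*n).choose (n+k) = (2*n-1).choose (n+k-1) + (2*n-1).choose (n+k) := by
    have := Nat.choose_succ_succ (2*n-1) (n+k-1)
    simp only [Nat.succ_eq_add_one] at this
    have e1 : 2*n-1+1 = 2*n := by omega
    have e2 : n+k-1+1 = n+k := by omega
    rwa [e1, e2] at this
  have h1' : (2*(n:ℝ)) * ((2*n-1).choose (n+k-1) : ℝ) = ((2*n).choose (n+k) : ℝ) * ((n:ℝ)+k) := by
    exact_mod_cast h1
  have h2' : ((2*n).choose (n+k) : ℝ) = ((2*n-1).choose (n+k-1) : ℝ) + ((2*n-1).choose (n+k) : ℝ) := by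
    exact_mod_cast h2
  nlinarith [h1', h2']

lemma aux19_sum_k (n : ℕ) (hn : 1 ≤ n) :
    ∑ k ∈ Icc 1 n, (k:ℝ) * aux19c n k = n / 2 := by
  have hstep : ∑ k ∈ Icc 1 n, (k:ℝ) * aux19c n k
      = (∑ k ∈ Icc 1 n, (k:ℝ) * ((2*n).choose (n+k) : ℝ)) / ((2*n).choose n : ℝ) := by
    rw [Finset.sum_div]
    apply Finset.sum_congr rfl
    intro k hk
    rw [Finset.mem_Icc] at hk
    rw [aux19c_central hk.2, mul_div_assoc]
  have htel : ∑ k ∈ Icc 1 n, (k:ℝ) * ((2*n).choose (n+k) : ℝ)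
      = (n:ℝ) * ((2*n-1).choose n : ℝ) := by
    have : ∑ k ∈ Icc 1 n, (k:ℝ) * ((2*n).choose (n+k) : ℝ)
        = ∑ i ∈ range n, ((n:ℝ) * ((2*n-1).choose (n+i) : ℝ) - (n:ℝ) * ((2*n-1).choose (n+(i+1)) : ℝ)) := by
      rw [← Finset.Ico_add_one_right_eq_Icc, Finset.sum_Ico_eq_sum_range]
      apply Finset.sum_congr (by norm_num)
      intro i hi
      rw [Finset.mem_range] at hi
      have := aux19_telescope hn (by omega : 1 ≤ 1+i) (by omega : 1+i ≤ n)
      have e : n + (1+i) - 1 = n + i := by omega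
      have e2 : n + (1+i) = n+(i+1) := by omega
      rw [e, e2] at this
      rw [show n + (1+i) = n+(i+1) by omega, this]
      push_cast
      ring
    rw [this, Finset.sum_range_sub' (fun i => (n:ℝ) * ((2*n-1).choose (n+i) : ℝ))]
    have : (2*n-1).choose (n+n) = 0 := Nat.choose_eq_zero_of_lt (by omega)
    simp [this]
  have hcn : ((2*n).choose n : ℝ) = 2 * ((2*n-1).choose n : ℝ) := by
    have h2 : (2*n).choose n = (2*n-1).choose (n-1) + (2*n-1).choose n := by
      have := Nat.choose_succ_succ (2*n-1) (n-1)
      simp only [Nat.succ_eq_add_one] at this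
      have e1 : 2*n-1+1 = 2*n := by omega
      have e2 : n-1+1 = n := by omega
      rwa [e1, e2] at this
    have hsymm : (2*n-1).choose (n-1) = (2*n-1).choose n := by
      have := Nat.choose_symm (by omega : n ≤ 2*n-1)
      have e : 2*n-1-n = n-1 := by omega
      rw [e] at this
      exact this
    rw [h2, hsymm]
    push_cast
    ring
  have hpos : ((2*n-1).choose n : ℝ) ≠ 0 := by
    have : 0 < (2*n-1).choose n := Nat.choose_pos (by omega)
    exact_mod_cast this.ne'
  rw [hstep, htel, hcn]
  field_simp

lemma aux19_sum_rec (m : ℕ) (w : ℕ → ℝ) :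
    ∑ k ∈ Icc 1 (m+1), aux19c (m+1) k * w k
      = ∑ k ∈ Icc 1 m, aux19c m k * w k
        + (1/((m:ℝ)+1)^2) * ∑ k ∈ Icc 1 (m+1), (k:ℝ)^2 * aux19c (m+1) k * w k := by
  have hext : ∑ k ∈ Icc 1 m, aux19c m k * w k = ∑ k ∈ Icc 1 (m+1), aux19c m k * w k := by
    rw [Finset.sum_Icc_succ_top (by omega : 1 ≤ m+1)]
    have : aux19c m (m+1) = 0 := by
      unfold aux19c
      rw [Nat.choose_eq_zero_of_lt (Nat.lt_succ_self m)]
      simp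
    rw [this]; ring
  rw [hext, Finset.mul_sum, ← Finset.sum_add_distrib]
  apply Finset.sum_congr rfl
  intro k hk
  rw [Finset.mem_Icc] at hk
  have := aux19c_rec (m := m) (k := k) hk.2
  have hm1 : ((m:ℝ)+1) ≠ 0 := by positivity
  have : aux19c (m+1) k = aux19c m k + ((k:ℝ)/((m:ℝ)+1))^2 * aux19c (m+1) k := by
    push_cast at this ⊢; linarith
  calc aux19c (m+1) k * w k
      = (aux19c m k + ((k:ℝ)/((m:ℝ)+1))^2 * aux19c (m+1) k) * w k := by rw [← this]
    _ = aux19c m k * w k + 1/((m:ℝ)+1)^2 * ((k:ℝ)^2 * aux19c (m+1) k * w k) := by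
        field_simp

lemma HstarO_one (l : List ℕ) : HstarO l 1 = 1 := by
  induction l with
  | nil => rfl
  | cons s rest ih =>
    rw [HstarO]
    simp [ih]

lemma HstarO_succ (s : ℕ) (rest : List ℕ) (n : ℕ) :
    HstarO (s :: rest) (n+1) = HstarO (s :: rest) n + (1:ℝ)/((n:ℝ)+1)^s * HstarO rest (n+1) := by
  show (∑ k ∈ Icc 1 (n+1), (1:ℝ)/(k:ℝ)^s * HstarO rest k)
      = (∑ k ∈ Icc 1 n, (1:ℝ)/(k:ℝ)^s * HstarO rest k) + _
  rw [Finset.sum_Icc_succ_top (by omega : 1 ≤ n+1)]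
  push_cast
  ring


lemma aux19_main : ∀ a n, 1 ≤ n →
    HstarO (List.replicate a 2 ++ [1]) n
      = 2 * ∑ k ∈ Icc 1 n, aux19c n k * ((1:ℝ)/(k:ℝ)^(2*a+1)) := by
  intro a
  induction a with
  | zero =>
    intro n hn
    induction n with
    | zero => omega
    | succ m ihm =>
      rcases Nat.lt_or_ge m 1 with h1 | h1
      · -- m = 0, n = 1
        have hm0 : m = 0 := by omega
        subst hm0
        simp only [List.replicate, List.nil_append]
        rw [HstarO_one]
        have hc : aux19c 1 1 = 1/2 := by unfold aux19c; norm_num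
        rw [show Icc 1 1 = {1} from rfl, Finset.sum_singleton, hc]
        norm_num
      · have ih := ihm h1
        simp only [List.replicate, List.nil_append] at ih ⊢
        rw [HstarO_succ 1 [] m, ih, aux19_sum_rec m (fun k => (1:ℝ)/(k:ℝ)^(2*0+1))]
        have hw : ∑ k ∈ Icc 1 (m+1), (k:ℝ)^2 * aux19c (m+1) k * ((1:ℝ)/(k:ℝ)^(2*0+1))
            = ∑ k ∈ Icc 1 (m+1), (k:ℝ) * aux19c (m+1) k := by
          apply Finset.sum_congr rfl
          intro k hk
          rw [Finset.mem_Icc] at hk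
          have : (k:ℝ) ≠ 0 := by exact_mod_cast (by omega : k ≠ 0)
          field_simp
          ring
        rw [hw, aux19_sum_k (m+1) (by omega)]
        rw [show HstarO [] (m+1) = 1 from rfl]
        have hm1 : ((m:ℝ)+1) ≠ 0 := by positivity
        push_cast
        field_simp
  | succ a iha =>
    intro n hn
    induction n with
    | zero => omega
    | succ m ihm =>
      have hrep : List.replicate (a+1) 2 ++ [1] = 2 :: (List.replicate a 2 ++ [1]) := by
        simp [List.replicate]
      rcases Nat.lt_or_ge m 1 with h1 | h1
      · have hm0 : m = 0 := by omega
        subst hm0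
        rw [HstarO_one]
        have hc : aux19c 1 1 = 1/2 := by unfold aux19c; norm_num
        rw [show Icc 1 1 = {1} from rfl, Finset.sum_singleton, hc]
        norm_num
      · have ih := ihm h1
        rw [hrep] at ih ⊢
        rw [HstarO_succ 2 (List.replicate a 2 ++ [1]) m, ih,
          aux19_sum_rec m (fun k => (1:ℝ)/(k:ℝ)^(2*(a+1)+1)),
          iha (m+1) (by omega)]
        have hw : ∑ k ∈ Icc 1 (m+1), (k:ℝ)^2 * aux19c (m+1) k * ((1:ℝ)/(k:ℝ)^(2*(a+1)+1))
            = ∑ k ∈ Icc 1 (m+1), aux19c (m+1) k * ((1:ℝ)/(k:ℝ)^(2*a+1)) := by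
          apply Finset.sum_congr rfl
          intro k hk
          rw [Finset.mem_Icc] at hk
          have hk0 : (k:ℝ) ≠ 0 := by exact_mod_cast (by omega : k ≠ 0)
          have : (k:ℝ)^(2*(a+1)+1) = (k:ℝ)^2 * (k:ℝ)^(2*a+1) := by
            rw [← pow_add]; ring_nf
          rw [this]
          field_simp
        rw [hw]
        have hm1 : ((m:ℝ)+1) ≠ 0 := by positivity
        push_cast
        ring

lemma aux19c_descF (n j : ℕ) :
    aux19c n j = (n.descFactorial j : ℝ) / ((n+j).descFactorial j : ℝ) := by
  unfold aux19c
  have h1 : (n+j).choose n = (n+j).choose j := by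
    have := Nat.choose_symm (Nat.le_add_right n j)
    rw [Nat.add_sub_cancel_left] at this
    omega
  rw [h1]
  have e1 : (n.descFactorial j : ℝ) = (j.factorial : ℝ) * (n.choose j : ℝ) := by
    exact_mod_cast congrArg (Nat.cast : ℕ → ℝ) (Nat.descFactorial_eq_factorial_mul_choose n j)
  have e2 : ((n+j).descFactorial j : ℝ) = (j.factorial : ℝ) * ((n+j).choose j : ℝ) := by
    exact_mod_cast congrArg (Nat.cast : ℕ → ℝ) (Nat.descFactorial_eq_factorial_mul_choose (n+j) j)
  rw [e1, e2]
  have hf : (j.factorial : ℝ) ≠ 0 := by exact_mod_cast (Nat.factorial_pos _).ne'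
  rcases eq_or_ne (((n+j).choose j : ℝ)) 0 with h | h
  · simp [h]
  · field_simp

lemma aux19c_lower {n j : ℕ} (h : j ≤ n) :
    (((n:ℝ)-j)/((n:ℝ)+j))^j ≤ aux19c n j := by
  rw [aux19c_descF]
  have hnj : (0:ℝ) ≤ (n:ℝ) - j := by
    have : (j:ℝ) ≤ n := by exact_mod_cast h
    linarith
  have hA : ((n:ℝ)-j)^j ≤ (n.descFactorial j : ℝ) := by
    rw [Nat.descFactorial_eq_prod_range]
    push_cast
    calc ((n:ℝ)-j)^j = ∏ _i ∈ range j, ((n:ℝ)-j) := by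
          rw [Finset.prod_const, Finset.card_range]
      _ ≤ ∏ i ∈ range j, ((n:ℝ)-(i:ℝ)) := by
          apply Finset.prod_le_prod
          · intro i _; exact hnj
          · intro i hi
            rw [Finset.mem_range] at hi
            have : (i:ℝ) ≤ j := by exact_mod_cast hi.le
            linarith
      _ = ∏ i ∈ range j, (((n - i : ℕ)):ℝ) := by
          apply Finset.prod_congr rfl
          intro i hi
          rw [Finset.mem_range] at hi
          rw [Nat.cast_sub (by omega : i ≤ n)]
  have hB : ((n+j).descFactorial j : ℝ) ≤ ((n:ℝ)+j)^j := by
    rw [Nat.descFactorial_eq_prod_range]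
    push_cast
    calc (∏ i ∈ range j, (((n + j - i : ℕ)):ℝ))
        ≤ ∏ _i ∈ range j, ((n:ℝ)+j) := by
          apply Finset.prod_le_prod
          · intro i _; positivity
          · intro i hi
            rw [Finset.mem_range] at hi
            rw [Nat.cast_sub (by omega : i ≤ n + j)]
            push_cast
            have : (0:ℝ) ≤ i := by positivity
            linarith
      _ = ((n:ℝ)+j)^j := by rw [Finset.prod_const, Finset.card_range]
  have hBpos : (0:ℝ) < ((n+j).descFactorial j : ℝ) := by
    have : (n+j).descFactorial j ≠ 0 := by
      rw [Ne, Nat.descFactorial_eq_zero_iff_lt]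
      omega
    have := Nat.pos_of_ne_zero this
    exact_mod_cast this
  rw [div_pow]
  exact div_le_div₀ (by positivity) hA hBpos hB

lemma aux19c_tendsto (j : ℕ) :
    Filter.Tendsto (fun n => aux19c n j) Filter.atTop (nhds 1) := by
  have hbase : Filter.Tendsto (fun n : ℕ => ((n:ℝ)-j)/((n:ℝ)+j)) Filter.atTop (nhds 1) := by
    have h0 : Filter.Tendsto (fun n : ℕ => (2*(j:ℝ))/((n:ℝ)+j)) Filter.atTop (nhds 0) := by
      have := (tendsto_const_div_atTop_nhds_zero_nat (2*(j:ℝ))).comp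
        (Filter.tendsto_add_atTop_nat j)
      apply this.congr
      intro n
      simp only [Function.comp]
      push_cast
      ring
    have h1 := (tendsto_const_nhds (x := (1:ℝ)) (f := Filter.atTop (α := ℕ))).sub h0
    rw [sub_zero] at h1
    apply h1.congr'
    filter_upwards [Filter.eventually_ge_atTop 1] with n hn
    have hpos : (0:ℝ) < (n:ℝ)+j := by
      have : (1:ℝ) ≤ (n:ℝ) := by exact_mod_cast hn
      positivity
    field_simp
    ring
  have hL : Filter.Tendsto (fun n : ℕ => (((n:ℝ)-j)/((n:ℝ)+j))^j) Filter.atTop (nhds 1) := by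
    have := hbase.pow j
    rwa [one_pow] at this
  apply tendsto_of_tendsto_of_tendsto_of_le_of_le' hL tendsto_const_nhds
  · filter_upwards [Filter.eventually_ge_atTop j] with n hn
    exact aux19c_lower hn
  · filter_upwards with n
    exact aux19c_le_one n j

lemma HstarO_nonneg (l : List ℕ) (n : ℕ) : 0 ≤ HstarO l n := by
  induction l generalizing n with
  | nil => norm_num [HstarO]
  | cons s rest ih =>
    rw [HstarO]
    apply Finset.sum_nonneg
    intro k _
    have := ih k
    positivity

lemma HstarO_zero (s : ℕ) (rest : List ℕ) : HstarO (s :: rest) 0 = 0 := by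
  rw [HstarO]; simp

lemma aux19_part2 (a : ℕ) (ha : 1 ≤ a) :
    zetaStarO (List.replicate a 2 ++ [1])
      = 2 * ∑' k : ℕ, (1 : ℝ) / ((k : ℝ) + 1) ^ (2 * a + 1) := by
  obtain ⟨b, rfl⟩ : ∃ b, a = b + 1 := ⟨a - 1, by omega⟩
  set a := b + 1
  set rest := List.replicate b 2 ++ [1] with hrest
  have hrep : List.replicate a 2 ++ [1] = 2 :: rest := by rfl
  set t : ℕ → ℝ := fun k => (1 : ℝ) / ((k : ℝ) + 1) ^ (2 * a + 1) with ht
  set u : ℕ → ℝ := fun k => (1 : ℝ) / ((k : ℝ) + 1) ^ 2 * HstarO rest (k + 1) with hu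
  set v : ℕ → ℕ → ℝ := fun N k => aux19c N (k+1) * t k with hv
  have ht_nonneg : ∀ k, 0 ≤ t k := fun k => by rw [ht]; positivity
  have ht_summ : Summable t := by
    have h1 : Summable (fun n : ℕ => 1 / (n:ℝ) ^ (2*a+1)) :=
      Real.summable_one_div_nat_pow.2 (by omega)
    have h2 := (summable_nat_add_iff 1).2 h1
    apply h2.congr
    intro k
    rw [ht]
    push_cast
    norm_num
  have hu_nonneg : ∀ k, 0 ≤ u k := fun k => by
    rw [hu]
    have := HstarO_nonneg rest (k+1)
    positivity
  have hpart : ∀ N, ∑ k ∈ range N, u k = HstarO (2 :: rest) N := by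
    intro N
    induction N with
    | zero => simp [HstarO_zero]
    | succ m ih =>
      rw [Finset.sum_range_succ, ih, HstarO_succ]
  have hGN : ∀ N, HstarO (2 :: rest) N = 2 * ∑ k ∈ range N, v N k := by
    intro N
    rcases Nat.eq_zero_or_pos N with h0 | h0
    · subst h0; simp [HstarO_zero]
    · rw [← hrep, aux19_main a N h0]
      congr 1
      rw [← Finset.Ico_add_one_right_eq_Icc, Finset.sum_Ico_eq_sum_range]
      apply Finset.sum_congr (by norm_num)
      intro i _
      rw [hv, ht]
      rw [show 1 + i = i + 1 by omega]
      push_cast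
      ring
  have hvt : ∀ N k, v N k ≤ t k := by
    intro N k
    rw [hv]
    calc aux19c N (k+1) * t k ≤ 1 * t k := by
          apply mul_le_mul_of_nonneg_right (aux19c_le_one N (k+1)) (ht_nonneg k)
      _ = t k := one_mul _
  have hv_nonneg : ∀ N k, 0 ≤ v N k := fun N k => by
    rw [hv]; exact mul_nonneg (aux19c_nonneg _ _) (ht_nonneg k)
  have hu_summ : Summable u := by
    apply summable_of_sum_range_le hu_nonneg (c := 2 * ∑' k, t k)
    intro N
    rw [hpart N, hGN N]
    have h1 : ∑ k ∈ range N, v N k ≤ ∑ k ∈ range N, t k :=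
      Finset.sum_le_sum (fun k _ => hvt N k)
    have h2 : ∑ k ∈ range N, t k ≤ ∑' k, t k :=
      Summable.sum_le_tsum _ (fun k _ => ht_nonneg k) ht_summ
    linarith
  have htsum_v : ∀ N, ∑' k, v N k = ∑ k ∈ range N, v N k := by
    intro N
    apply tsum_eq_sum
    intro k hk
    rw [Finset.mem_range, not_lt] at hk
    have : N.choose (k+1) = 0 := Nat.choose_eq_zero_of_lt (by omega)
    simp [hv, aux19c, this]
  have hlim2 : Filter.Tendsto (fun N => ∑' k, v N k) Filter.atTop (nhds (∑' k, t k)) := by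
    apply tendsto_tsum_of_dominated_convergence ht_summ
    · intro k
      have := (aux19c_tendsto (k+1)).mul_const (t k)
      rwa [one_mul] at this
    · filter_upwards with N k
      rw [Real.norm_eq_abs, abs_of_nonneg (hv_nonneg N k)]
      exact hvt N k
  have hlim1 : Filter.Tendsto (fun N => ∑ k ∈ range N, u k) Filter.atTop (nhds (∑' k, u k)) :=
    hu_summ.hasSum.tendsto_sum_nat
  have hlim1' : Filter.Tendsto (fun N => ∑ k ∈ range N, u k) Filter.atTop (nhds (2 * ∑' k, t k)) := by
    have : (fun N => ∑ k ∈ range N, u k) = fun N => 2 * ∑' k, v N k := by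
      funext N
      rw [hpart N, hGN N, htsum_v N]
    rw [this]
    exact hlim2.const_mul 2
  have hkey : ∑' k, u k = 2 * ∑' k, t k := tendsto_nhds_unique hlim1 hlim1'
  have hz : zetaStarO (List.replicate a 2 ++ [1]) = ∑' k, u k := by
    rw [hrep, zetaStarO]
  rw [hz, hkey]

theorem stmt19 (n a : ℕ) (hn : 1 ≤ n) :
    (HstarO (List.replicate a 2 ++ [1]) n
      = 2 * ∑ k ∈ Finset.Icc 1 n,
          ((n.choose k : ℝ) / ((n + k).choose n)) * ((1 : ℝ) / (k : ℝ) ^ (2 * a + 1))) ∧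
    (1 ≤ a →
      zetaStarO (List.replicate a 2 ++ [1])
        = 2 * ∑' k : ℕ, (1 : ℝ) / ((k : ℝ) + 1) ^ (2 * a + 1)) := by
  constructor
  · rw [aux19_main a n hn]
    simp only [aux19c]
  · exact fun ha => aux19_part2 a ha
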